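/- If G is a connected finite simple graph with no even cycle, u and v are vertices at distance 2 on a common cycle C of G of length at least 5 (so that there is a path u-w-v along C), then the graph G' = KT(G, u, v) obtained by the Kelmans transformation with beneficiary u is connected. -/

import Mathlib

open Polynomial

/-- Number of matchings with exactly `k` edges in `G`. -/
noncomputable def matchingCount {V : Type*} [Fintype V] (G : SimpleGraph V) (k : ℕ) : ℕ :=
  Nat.card {s : Finset (Sym2 V) // s.card = k ∧ (∀ e ∈ s, e ∈ G.edgeSet) ∧
    ∀ e ∈ s, ∀ f ∈ s, e ≠ f → ∀ x : V, x ∈ e → x ∉ f}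

/-- The matching polynomial `m(G,x) = ∑ (-1)^k m_k(G) x^(n-2k)`. -/
noncomputable def matchPoly {V : Type*} [Fintype V] (G : SimpleGraph V) : Polynomial ℝ :=
  ∑ k ∈ Finset.range (Fintype.card V + 1),
    Polynomial.C ((-1 : ℝ) ^ k * (matchingCount G k : ℝ)) *
      Polynomial.X ^ (Fintype.card V - 2 * k)

/-- The maximum real root `t(G)` of the matching polynomial. -/
noncomputable def maxRoot {V : Type*} [Fintype V] (G : SimpleGraph V) : ℝ :=
  sSup {x : ℝ | (matchPoly G).eval x = 0}

/-- `w` is a neighbour of `v` that gets moved to `u` by the Kelmans transformation. -/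
def movedNbr {V : Type*} (G : SimpleGraph V) (u v w : V) : Prop :=
  G.Adj v w ∧ w ≠ u ∧ ¬ G.Adj u w

/-- The Kelmans transformation of `G` with beneficiary `u` and co-beneficiary `v`:
every edge `vw` with `w ≠ u`, `w` not adjacent to `u`, is replaced by the edge `uw`. -/
def kelmans {V : Type*} (G : SimpleGraph V) (u v : V) : SimpleGraph V where
  Adj a b :=
    (G.Adj a b ∧ ¬ (a = v ∧ movedNbr G u v b) ∧ ¬ (b = v ∧ movedNbr G u v a))
    ∨ (a = u ∧ movedNbr G u v b) ∨ (b = u ∧ movedNbr G u v a)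
  symm := by
    constructor
    intro a b h
    rcases h with ⟨h1, h2, h3⟩ | h | h
    · exact Or.inl ⟨h1.symm, h3, h2⟩
    · exact Or.inr (Or.inr h)
    · exact Or.inr (Or.inl h)
  loopless := by
    constructor
    intro a h
    rcases h with ⟨h1, _, _⟩ | ⟨rfl, _, hne, _⟩ | ⟨rfl, _, hne, _⟩
    · exact (G.ne_of_adj h1) rfl
    · exact hne rfl
    · exact hne rfl

/-- If `G` is a connected graph with no even cycle, and `u, v` are at distance `2` along a
common cycle of length at least 5 (via the path `u-w-v` on the cycle), then the Kelmans
transformation `KT(G,u,v)` yields a connected graph. -/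
theorem kelmans_connected {V : Type*} [Fintype V] (G : SimpleGraph V)
    (hconn : G.Connected)
    (hodd : ∀ (z : V) (c : G.Walk z z), c.IsCycle → ¬ Even c.length)
    (u v w : V) (hne : u ≠ v)
    (c : G.Walk u u) (hc : c.IsCycle) (hlen : 5 ≤ c.length)
    (h1 : s(u, w) ∈ c.edges) (h2 : s(w, v) ∈ c.edges) :
    (kelmans G u v).Connected := by
  have hadj_uw : G.Adj u w := G.mem_edgeSet.mp (c.edges_subset_edgeSet h1)
  have hadj_wv : G.Adj w v := G.mem_edgeSet.mp (c.edges_subset_edgeSet h2)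
  have hwv : w ≠ v := hadj_wv.ne
  have kuw : (kelmans G u v).Adj u w :=
    Or.inl ⟨hadj_uw, fun h => hne h.1, fun h => hwv h.1⟩
  have kwv : (kelmans G u v).Adj w v :=
    Or.inl ⟨hadj_wv, fun h => hwv h.1, fun h => h.2.2.2 hadj_uw⟩
  have hreach_v : (kelmans G u v).Reachable u v :=
    kuw.reachable.trans kwv.reachable
  have step : ∀ a b : V, (kelmans G u v).Reachable u a → G.Adj a b →
      (kelmans G u v).Reachable u b := by
    intro a b hra hab
    by_cases hbv : b = v
    · exact hbv ▸ hreach_v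
    by_cases hav : a = v
    · by_cases hm : movedNbr G u v b
      · exact SimpleGraph.Adj.reachable (Or.inr (Or.inl ⟨rfl, hm⟩))
      · exact hra.trans (SimpleGraph.Adj.reachable
          (Or.inl ⟨hab, fun h => hm h.2, fun h => hbv h.1⟩))
    · exact hra.trans (SimpleGraph.Adj.reachable
        (Or.inl ⟨hab, fun h => hav h.1, fun h => hbv h.1⟩))
  have key2 : ∀ (a x : V) (p : G.Walk a x), (kelmans G u v).Reachable u a →
      (kelmans G u v).Reachable u x := by
    intro a x p
    induction p with
    | nil => exact id
    | cons h q ih => exact fun hra => ih (step _ _ hra h)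
  have key : ∀ x : V, (kelmans G u v).Reachable u x := by
    intro x
    obtain ⟨p⟩ := hconn.preconnected u x
    exact key2 u x p (SimpleGraph.Reachable.refl u)
  haveI : Nonempty V := hconn.nonempty
  exact SimpleGraph.Connected.mk (fun x y => (key x).symm.trans (key y))
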